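/- Let P₁,…,P_k ∈ {0,1}^{r×n} be a patch structure, α ∈ [0,1], and f_w(x) = (1/k)·Σ_{i=1}^k σ_α(wᵀPᵢx). Let μ be a probability measure on ℝⁿ symmetric about the origin with finite second moments, Σ = E_{x∼μ}[xxᵀ], and P_Σ = Σ_{i,j=1}^k PᵢΣPⱼᵀ. Then for all w, w* ∈ ℝ^r, E_{x∼μ}[(f_{w*}(x) − f_w(x))·((w* − w)ᵀ(Σ_{i=1}^k Pᵢ)x)] = ((1+α)/(2k))·(w* − w)ᵀ P_Σ (w* − w). -/

import Mathlib

open MeasureTheory Matrix Finset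
open scoped RealInnerProductSpace

noncomputable section

/-- Leaky ReLU activation with parameter `α`. -/
def lrelu (α z : ℝ) : ℝ := if 0 ≤ z then z else α * z

/-- A patch structure: each `P i` is a 0/1 matrix with exactly one 1 in each row
and at most one 1 in each column. -/
def IsPatchStruct {r n k : ℕ} (P : Fin k → Matrix (Fin r) (Fin n) ℝ) : Prop :=
  (∀ i a b, P i a b = 0 ∨ P i a b = 1) ∧
  (∀ i a, ∃! b, P i a b = 1) ∧
  (∀ i b a a', P i a b = 1 → P i a' b = 1 → a = a')

/-- View a plain vector as an element of Euclidean space. -/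
def toEuc {m : ℕ} (v : Fin m → ℝ) : EuclideanSpace ℝ (Fin m) := WithLp.toLp 2 v

/-- The one-hidden-layer convolutional network
`f_w(x) = (1/k) ∑ i, σ_α (wᵀ Pᵢ x)` with average pooling. -/
def convnet {r n k : ℕ} (α : ℝ) (P : Fin k → Matrix (Fin r) (Fin n) ℝ)
    (w : EuclideanSpace ℝ (Fin r)) (x : EuclideanSpace ℝ (Fin n)) : ℝ :=
  (1 / (k : ℝ)) * ∑ i, lrelu α ((w : Fin r → ℝ) ⬝ᵥ (P i).mulVec x)

/-- The (uncentered) covariance matrix `Σ = E_{x∼μ}[x xᵀ]`. -/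
def covMat {n : ℕ} (μ : Measure (EuclideanSpace ℝ (Fin n))) : Matrix (Fin n) (Fin n) ℝ :=
  Matrix.of fun i j => ∫ x, x i * x j ∂μ

/-- Maximum eigenvalue of a Hermitian (real symmetric) matrix. -/
def lamMax {m : ℕ} (A : Matrix (Fin m) (Fin m) ℝ) (hA : A.IsHermitian) : ℝ :=
  ⨆ i, hA.eigenvalues i

/-- Minimum eigenvalue of a Hermitian (real symmetric) matrix. -/
def lamMin {m : ℕ} (A : Matrix (Fin m) (Fin m) ℝ) (hA : A.IsHermitian) : ℝ :=
  ⨅ i, hA.eigenvalues i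

/- ----------------- auxiliary lemmas ----------------- -/

lemma lrelu_eq (α z : ℝ) : lrelu α z = ((1+α)*z + (1-α)*|z|)/2 := by
  unfold lrelu
  split_ifs with h
  · rw [abs_of_nonneg h]; ring
  · rw [abs_of_neg (lt_of_not_ge h)]; ring

lemma lrelu_sub_neg (α z : ℝ) : lrelu α z - lrelu α (-z) = (1+α)*z := by
  rw [lrelu_eq, lrelu_eq, abs_neg]; ring

lemma lrelu_lip {α : ℝ} (h0 : 0 ≤ α) (h1 : α ≤ 1) (a b : ℝ) :
    |lrelu α a - lrelu α b| ≤ |a - b| := by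
  rw [lrelu_eq, lrelu_eq]
  have h2 : ((1+α)*a + (1-α)*|a|)/2 - ((1+α)*b + (1-α)*|b|)/2
      = ((1+α)*(a-b) + (1-α)*(|a|-|b|))/2 := by ring
  rw [h2]
  have hA : |(1+α)*(a-b)| = (1+α)*|a-b| := by
    rw [abs_mul, abs_of_nonneg (by linarith : (0:ℝ) ≤ 1+α)]
  have hB : |(1-α)*(|a|-|b|)| ≤ (1-α)*|a-b| := by
    rw [abs_mul, abs_of_nonneg (by linarith : (0:ℝ) ≤ 1-α)]
    exact mul_le_mul_of_nonneg_left (abs_abs_sub_abs_le_abs_sub a b) (by linarith)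
  have h3 : |(1+α)*(a-b) + (1-α)*(|a|-|b|)| ≤ 2*|a-b| := by
    calc |(1+α)*(a-b) + (1-α)*(|a|-|b|)|
        ≤ |(1+α)*(a-b)| + |(1-α)*(|a|-|b|)| := abs_add_le _ _
      _ ≤ 2*|a-b| := by rw [hA]; linarith
  calc |((1+α)*(a-b) + (1-α)*(|a|-|b|))/2|
      = |(1+α)*(a-b) + (1-α)*(|a|-|b|)|/2 := by rw [abs_div, abs_two]
    _ ≤ |a-b| := by linarith

lemma continuous_lrelu (α : ℝ) : Continuous (lrelu α) := by
  have h : lrelu α = fun z => ((1+α)*z + (1-α)*|z|)/2 := funext (lrelu_eq α)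
  rw [h]
  exact ((continuous_const.mul continuous_id).add
    (continuous_const.mul continuous_abs)).div_const 2

lemma abs_coord_le {n : ℕ} (x : EuclideanSpace ℝ (Fin n)) (i : Fin n) : |x i| ≤ ‖x‖ := by
  rw [EuclideanSpace.norm_eq, ← Real.sqrt_sq_eq_abs]
  apply Real.sqrt_le_sqrt
  calc x i ^ 2 = ‖x i‖ ^ 2 := by rw [Real.norm_eq_abs, sq_abs]
    _ ≤ ∑ j, ‖x j‖ ^ 2 :=
      Finset.single_le_sum (f := fun j => ‖x j‖^2) (fun j _ => sq_nonneg _) (Finset.mem_univ i)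

lemma dot_mulVec_abs_le {r n : ℕ} (v : Fin r → ℝ) (M : Matrix (Fin r) (Fin n) ℝ)
    (x : EuclideanSpace ℝ (Fin n)) :
    |v ⬝ᵥ M.mulVec x| ≤ (∑ a, ∑ b, |v a| * |M a b|) * ‖x‖ := by
  have hb : ∀ a, |(M.mulVec x) a| ≤ ∑ b, |M a b| * ‖x‖ := by
    intro a
    show |∑ b, M a b * x b| ≤ ∑ b, |M a b| * ‖x‖
    calc |∑ b, M a b * x b| ≤ ∑ b, |M a b * x b| := Finset.abs_sum_le_sum_abs _ _
      _ ≤ ∑ b, |M a b| * ‖x‖ := Finset.sum_le_sum fun b _ => by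
          rw [abs_mul]
          exact mul_le_mul_of_nonneg_left (abs_coord_le x b) (abs_nonneg _)
  calc |v ⬝ᵥ M.mulVec x| = |∑ a, v a * (M.mulVec x) a| := rfl
    _ ≤ ∑ a, |v a * (M.mulVec x) a| := Finset.abs_sum_le_sum_abs _ _
    _ = ∑ a, |v a| * |(M.mulVec x) a| := Finset.sum_congr rfl fun a _ => abs_mul _ _
    _ ≤ ∑ a, |v a| * (∑ b, |M a b| * ‖x‖) :=
        Finset.sum_le_sum fun a _ => mul_le_mul_of_nonneg_left (hb a) (abs_nonneg _)
    _ = (∑ a, ∑ b, |v a| * |M a b|) * ‖x‖ := by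
        rw [Finset.sum_mul]
        refine Finset.sum_congr rfl fun a _ => ?_
        rw [Finset.mul_sum, Finset.sum_mul]
        exact Finset.sum_congr rfl fun b _ => by ring

lemma sum_mulVec' {m n k : ℕ} (P : Fin k → Matrix (Fin m) (Fin n) ℝ) (x : Fin n → ℝ)
    (v : Fin m → ℝ) :
    v ⬝ᵥ (∑ i, P i).mulVec x = ∑ i, v ⬝ᵥ (P i).mulVec x := by
  have h : (∑ i, P i).mulVec x = ∑ i, (P i).mulVec x := by
    ext j
    simp [Matrix.mulVec, dotProduct, Matrix.sum_apply, Finset.sum_mul]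
    rw [Finset.sum_comm]
  rw [h]
  show ∑ a, v a * (∑ i, (P i).mulVec x) a = _
  simp only [Finset.sum_apply, Finset.mul_sum]
  rw [Finset.sum_comm]
  rfl

lemma quad_expand {r n : ℕ} (d : Fin r → ℝ) (A : Matrix (Fin r) (Fin n) ℝ)
    (S : Matrix (Fin n) (Fin n) ℝ) :
    d ⬝ᵥ (A * S * Aᵀ).mulVec d
      = ∑ p, ∑ q, Matrix.vecMul d A p * Matrix.vecMul d A q * S p q := by
  rw [Matrix.dotProduct_mulVec, ← Matrix.vecMul_vecMul, ← Matrix.vecMul_vecMul,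
    Matrix.vecMul_transpose, dotProduct_comm, Matrix.dotProduct_mulVec]
  set c := Matrix.vecMul d A with hc
  show ∑ q, c q * (Matrix.vecMul c S) q = _
  have : ∀ q, (Matrix.vecMul c S) q = ∑ p, c p * S p q := fun q => rfl
  simp only [this, Finset.mul_sum]
  rw [Finset.sum_comm]
  exact Finset.sum_congr rfl fun p _ => Finset.sum_congr rfl fun q _ => by ring

lemma sum_PSP {r n k : ℕ} (P : Fin k → Matrix (Fin r) (Fin n) ℝ)
    (S : Matrix (Fin n) (Fin n) ℝ) :
    ∑ i, ∑ j, P i * S * (P j)ᵀ = (∑ i, P i) * S * (∑ i, P i)ᵀ := by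
  rw [Matrix.transpose_sum, Matrix.sum_mul Finset.univ P S,
    Matrix.sum_mul Finset.univ (fun i => P i * S) (∑ i, (P i)ᵀ)]
  exact Finset.sum_congr rfl fun i _ => (Matrix.mul_sum Finset.univ (fun j => (P j)ᵀ) (P i * S)).symm

/-- For a patch structure, `α ∈ [0,1]`, and a symmetric probability
measure `μ` with finite second moments, covariance `Σ` and `P_Σ = ∑_{i,j} Pᵢ Σ Pⱼᵀ`,
`E[(f_{w*}(x) − f_w(x))·((w*−w)ᵀ(∑ᵢPᵢ)x)] = ((1+α)/(2k))·(w*−w)ᵀ P_Σ (w*−w)`. -/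
theorem stmt4 {n r k : ℕ} (hk : 0 < k) (P : Fin k → Matrix (Fin r) (Fin n) ℝ)
    (hP : IsPatchStruct P) (α : ℝ) (hα : α ∈ Set.Icc (0 : ℝ) 1)
    (μ : Measure (EuclideanSpace ℝ (Fin n))) [IsProbabilityMeasure μ]
    (hsymm : μ.map (fun x => -x) = μ)
    (hmom : Integrable (fun x => ‖x‖ ^ 2) μ)
    (w wstar : EuclideanSpace ℝ (Fin r)) :
    ∫ x, (convnet α P wstar x - convnet α P w x)
        * ((fun j => wstar j - w j) ⬝ᵥ (∑ i, P i).mulVec x) ∂μ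
      = (1 + α) / (2 * k)
          * ((fun j => wstar j - w j) ⬝ᵥ
              (∑ i, ∑ j, P i * covMat μ * (P j)ᵀ).mulVec (fun j => wstar j - w j)) := by
  obtain ⟨hα0, hα1⟩ := hα
  have hk' : (0:ℝ) < (k:ℝ) := by exact_mod_cast hk
  set d : Fin r → ℝ := fun j => wstar j - w j with hd
  set A : Matrix (Fin r) (Fin n) ℝ := ∑ i, P i with hA
  set g : EuclideanSpace ℝ (Fin n) → ℝ :=
    fun x => (convnet α P wstar x - convnet α P w x) * (d ⬝ᵥ A.mulVec x) with hg
  -- d against a vector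
  have hdsub : ∀ y : Fin r → ℝ,
      d ⬝ᵥ y = (wstar : Fin r → ℝ) ⬝ᵥ y - (w : Fin r → ℝ) ⬝ᵥ y := by
    intro y
    show ∑ j, (wstar j - w j) * y j = ∑ j, wstar j * y j - ∑ j, w j * y j
    rw [← Finset.sum_sub_distrib]
    exact Finset.sum_congr rfl fun j _ => by ring
  -- continuity
  have hcontdot : ∀ (v : Fin r → ℝ) (M : Matrix (Fin r) (Fin n) ℝ),
      Continuous (fun x : EuclideanSpace ℝ (Fin n) => v ⬝ᵥ M.mulVec x) := by
    intro v M
    show Continuous fun x : EuclideanSpace ℝ (Fin n) => ∑ a, v a * ∑ b, M a b * x b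
    exact continuous_finset_sum _ fun a _ => continuous_const.mul
      (continuous_finset_sum _ fun b _ => continuous_const.mul ((continuous_apply b).comp (PiLp.continuous_ofLp 2 _)))
  have hconv : ∀ v : EuclideanSpace ℝ (Fin r), Continuous (convnet α P v) := by
    intro v
    unfold convnet
    exact continuous_const.mul (continuous_finset_sum _ fun i _ =>
      (continuous_lrelu α).comp (hcontdot v (P i)))
  have hcont_g : Continuous g := ((hconv wstar).sub (hconv w)).mul (hcontdot d A)
  -- bound and integrability
  set C : ℝ := ∑ i, ∑ a, ∑ b, |d a| * |P i a b| with hC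
  have hC0 : (0:ℝ) ≤ C :=
    Finset.sum_nonneg fun i _ => Finset.sum_nonneg fun a _ => Finset.sum_nonneg fun b _ =>
      mul_nonneg (abs_nonneg _) (abs_nonneg _)
  have hsumabs : ∀ x : EuclideanSpace ℝ (Fin n),
      ∑ i, |d ⬝ᵥ (P i).mulVec x| ≤ C * ‖x‖ := by
    intro x
    calc ∑ i, |d ⬝ᵥ (P i).mulVec x|
        ≤ ∑ i, (∑ a, ∑ b, |d a| * |P i a b|) * ‖x‖ :=
          Finset.sum_le_sum fun i _ => dot_mulVec_abs_le d (P i) x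
      _ = C * ‖x‖ := by rw [hC, Finset.sum_mul]
  have hbound : ∀ x : EuclideanSpace ℝ (Fin n), ‖g x‖ ≤ (1/k * C * C) * ‖x‖^2 := by
    intro x
    rw [Real.norm_eq_abs]
    have h1 : |convnet α P wstar x - convnet α P w x| ≤ 1/k * (C * ‖x‖) := by
      unfold convnet
      rw [← mul_sub, abs_mul, abs_of_nonneg (le_of_lt (by positivity : (0:ℝ) < 1/(k:ℝ))),
        ← Finset.sum_sub_distrib]
      refine mul_le_mul_of_nonneg_left ?_ (by positivity)
      calc |∑ i, (lrelu α ((wstar : Fin r → ℝ) ⬝ᵥ (P i).mulVec x)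
              - lrelu α ((w : Fin r → ℝ) ⬝ᵥ (P i).mulVec x))|
          ≤ ∑ i, |lrelu α ((wstar : Fin r → ℝ) ⬝ᵥ (P i).mulVec x)
              - lrelu α ((w : Fin r → ℝ) ⬝ᵥ (P i).mulVec x)| := Finset.abs_sum_le_sum_abs _ _
        _ ≤ ∑ i, |(wstar : Fin r → ℝ) ⬝ᵥ (P i).mulVec x
              - (w : Fin r → ℝ) ⬝ᵥ (P i).mulVec x| :=
            Finset.sum_le_sum fun i _ => lrelu_lip hα0 hα1 _ _
        _ = ∑ i, |d ⬝ᵥ (P i).mulVec x| :=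
            Finset.sum_congr rfl fun i _ => by rw [hdsub]
        _ ≤ C * ‖x‖ := hsumabs x
    have h2 : |d ⬝ᵥ A.mulVec x| ≤ C * ‖x‖ := by
      rw [hA, sum_mulVec']
      calc |∑ i, d ⬝ᵥ (P i).mulVec x| ≤ ∑ i, |d ⬝ᵥ (P i).mulVec x| :=
            Finset.abs_sum_le_sum_abs _ _
        _ ≤ C * ‖x‖ := hsumabs x
    calc |g x| = |convnet α P wstar x - convnet α P w x| * |d ⬝ᵥ A.mulVec x| := abs_mul _ _
      _ ≤ (1/k * (C * ‖x‖)) * (C * ‖x‖) :=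
          mul_le_mul h1 h2 (abs_nonneg _) (by positivity)
      _ = (1/k * C * C) * ‖x‖^2 := by ring
  have hgint : Integrable g μ :=
    (hmom.const_mul _).mono' hcont_g.aestronglyMeasurable (ae_of_all _ hbound)
  -- symmetry
  have hneg_meas : AEMeasurable (fun x : EuclideanSpace ℝ (Fin n) => -x) μ :=
    continuous_neg.measurable.aemeasurable
  have hmap : ∫ x, g x ∂μ = ∫ x, g (-x) ∂μ := by
    conv_lhs => rw [← hsymm]
    rw [integral_map hneg_meas hcont_g.aestronglyMeasurable]
  have hgnegint : Integrable (fun x => g (-x)) μ := by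
    have h1 : Integrable g (μ.map (fun x => -x)) := by rw [hsymm]; exact hgint
    exact (integrable_map_measure hcont_g.aestronglyMeasurable hneg_meas).mp h1
  -- pointwise identity
  have hpt : ∀ x : EuclideanSpace ℝ (Fin n),
      g x + g (-x) = (1+α)/k * (d ⬝ᵥ A.mulVec x)^2 := by
    intro x
    have hLneg : ∀ (v : Fin r → ℝ) (M : Matrix (Fin r) (Fin n) ℝ),
        v ⬝ᵥ M.mulVec (-x) = -(v ⬝ᵥ M.mulVec x) := by
      intro v M
      show ∑ a, v a * ∑ b, M a b * (-x : EuclideanSpace ℝ (Fin n)) b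
          = -∑ a, v a * ∑ b, M a b * x b
      have hnx : ∀ b : Fin n, (-x : EuclideanSpace ℝ (Fin n)) b = -(x b) := fun b => rfl
      simp [hnx, Finset.mul_sum, mul_neg, Finset.sum_neg_distrib]
    have key : ∀ v : Fin r → ℝ,
        (∑ i, lrelu α (v ⬝ᵥ (P i).mulVec x)) - (∑ i, lrelu α (v ⬝ᵥ (P i).mulVec (-x)))
          = (1+α) * (v ⬝ᵥ A.mulVec x) := by
      intro v
      rw [← Finset.sum_sub_distrib]
      have hterm : ∀ i ∈ Finset.univ,
          lrelu α (v ⬝ᵥ (P i).mulVec x) - lrelu α (v ⬝ᵥ (P i).mulVec (-x))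
            = (1+α) * (v ⬝ᵥ (P i).mulVec x) := by
        intro i _
        rw [hLneg v (P i), lrelu_sub_neg]
      rw [Finset.sum_congr rfl hterm, ← Finset.mul_sum, hA, sum_mulVec']
    rw [hg]
    simp only [convnet, WithLp.ofLp_neg]
    rw [hLneg d A, hdsub (A.mulVec x)]
    have k1 := key (wstar : Fin r → ℝ)
    have k2 := key (w : Fin r → ℝ)
    linear_combination (((wstar : Fin r → ℝ) ⬝ᵥ A.mulVec x - (w : Fin r → ℝ) ⬝ᵥ A.mulVec x)/k) * k1
      - (((wstar : Fin r → ℝ) ⬝ᵥ A.mulVec x - (w : Fin r → ℝ) ⬝ᵥ A.mulVec x)/k) * k2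
  -- second-moment integrals
  have hxx : ∀ p q : Fin n, Integrable (fun x : EuclideanSpace ℝ (Fin n) => x p * x q) μ := by
    intro p q
    refine hmom.mono' ((((continuous_apply p).comp (PiLp.continuous_ofLp 2 _)).mul ((continuous_apply q).comp (PiLp.continuous_ofLp 2 _))).aestronglyMeasurable)
      (ae_of_all _ fun x => ?_)
    rw [Real.norm_eq_abs, abs_mul]
    calc |x p| * |x q| ≤ ‖x‖ * ‖x‖ :=
        mul_le_mul (abs_coord_le x p) (abs_coord_le x q) (abs_nonneg _) (norm_nonneg _)
      _ = ‖x‖^2 := (sq ‖x‖).symm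
  -- the quadratic integral
  have hL2 : ∫ x, (d ⬝ᵥ A.mulVec x)^2 ∂μ = d ⬝ᵥ (A * covMat μ * Aᵀ).mulVec d := by
    have h1 : ∀ x : EuclideanSpace ℝ (Fin n),
        (d ⬝ᵥ A.mulVec x)^2
          = ∑ p, ∑ q, Matrix.vecMul d A p * Matrix.vecMul d A q * (x p * x q) := by
      intro x
      rw [Matrix.dotProduct_mulVec, sq]
      set c := Matrix.vecMul d A with hc
      show (∑ p, c p * x p) * (∑ q, c q * x q) = _
      rw [Finset.sum_mul_sum]
      exact Finset.sum_congr rfl fun p _ => Finset.sum_congr rfl fun q _ => by ring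
    simp_rw [h1]
    rw [quad_expand]
    rw [integral_finset_sum _ (fun p _ =>
      integrable_finset_sum _ (fun q _ => (hxx p q).const_mul _))]
    refine Finset.sum_congr rfl fun p _ => ?_
    rw [integral_finset_sum _ (fun q _ => (hxx p q).const_mul _)]
    refine Finset.sum_congr rfl fun q _ => ?_
    rw [integral_const_mul]
    rfl
  -- assemble
  have hadd : ∫ x, (g x + g (-x)) ∂μ = 2 * ∫ x, g x ∂μ := by
    rw [integral_add hgint hgnegint, ← hmap]; ring
  have hfinal : ∫ x, (g x + g (-x)) ∂μ
      = (1+α)/k * (d ⬝ᵥ (A * covMat μ * Aᵀ).mulVec d) := by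
    simp_rw [hpt]
    rw [integral_const_mul, hL2]
  have hmain : ∫ x, g x ∂μ
      = (1+α)/(2*k) * (d ⬝ᵥ (A * covMat μ * Aᵀ).mulVec d) := by
    have h := hadd.symm.trans hfinal
    linear_combination h / 2
  calc ∫ x, (convnet α P wstar x - convnet α P w x) * (d ⬝ᵥ A.mulVec x) ∂μ
      = ∫ x, g x ∂μ := rfl
    _ = (1+α)/(2*k) * (d ⬝ᵥ (A * covMat μ * Aᵀ).mulVec d) := hmain
    _ = (1+α)/(2*k) * (d ⬝ᵥ (∑ i, ∑ j, P i * covMat μ * (P j)ᵀ).mulVec d) := by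
        rw [sum_PSP, ← hA]
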